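/- For every i ∈ {1, …, 2n} \ {2, 4}: (1) for every p ≥ 1, (R^p·ω)(e_1, e_3, …, e_1, e_3, e_i, e_3), with p leading pairs (e_1, e_3) followed by e_i, e_3, equals 0; (2) for every p ≥ 0, (R^{2p+1}·ω)(e_1, e_3, …, e_1, e_3, e_i, e_4), with 2p+1 leading pairs (e_1, e_3) followed by e_i, e_4, equals (−1)^{p+1} η^{p+1} ε^p (α ω(e_i, e_1) + ω(e_i, e_2)). -/

import Mathlib

noncomputable section

set_option linter.unusedSectionVars false

/-- Gauss-equation curvature `R(X,Y)Z = h(Y,Z)·S(X) − h(X,Z)·S(Y)`. -/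
def RR {V : Type*} [AddCommGroup V] [Module ℝ V]
    (h : V →ₗ[ℝ] V →ₗ[ℝ] ℝ) (S : V →ₗ[ℝ] V) (X Y Z : V) : V :=
  h Y Z • S X - h X Z • S Y

/-- One application of the curvature action on an `m`-linear form (encoded as a
function on lists of vectors): `(R·T)(X,Y,Z₁,…,Zₘ) = −∑ᵢ T(Z₁,…,R(X,Y)Zᵢ,…,Zₘ)`;
the two newest (leftmost) arguments are consumed. -/
def RAct {V : Type*} [AddCommGroup V] [Module ℝ V]
    (h : V →ₗ[ℝ] V →ₗ[ℝ] ℝ) (S : V →ₗ[ℝ] V) (T : List V → ℝ) : List V → ℝ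
  | X :: Y :: Zs =>
      -∑ i ∈ Finset.range Zs.length, T (Zs.set i (RR h S X Y (Zs.getD i 0)))
  | _ => 0

/-- `R^p · ω`, as a function on lists of vectors (of length `2p+2`):
`R⁰·ω = ω` and `R^p·ω = R·(R^{p−1}·ω)`. -/
def Rpow {V : Type*} [AddCommGroup V] [Module ℝ V]
    (h : V →ₗ[ℝ] V →ₗ[ℝ] ℝ) (S : V →ₗ[ℝ] V) (ω : V →ₗ[ℝ] V →ₗ[ℝ] ℝ) (p : ℕ) :
    List V → ℝ :=
  (RAct h S)^[p] (fun l => ω (l.getD 0 0) (l.getD 1 0))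

/-- The list `X, Y, X, Y, …` with `p` pairs `(X, Y)`. -/
def pairList {V : Type*} (X Y : V) : ℕ → List V
  | 0 => []
  | p + 1 => X :: Y :: pairList X Y p

/-- The list `f 1, y, f 2, y, …, f p, y`. -/
def interleave {V : Type*} (f : ℕ → V) (y : V) : ℕ → List V
  | 0 => []
  | p + 1 => interleave f y p ++ [f (p + 1), y]

section Aux

variable {V : Type*} [AddCommGroup V] [Module ℝ V]
  (h : V →ₗ[ℝ] V →ₗ[ℝ] ℝ) (S : V →ₗ[ℝ] V) (ω : V →ₗ[ℝ] V →ₗ[ℝ] ℝ)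

lemma RAct_cons (T : List V → ℝ) (X Y : V) (Zs : List V) :
    RAct h S T (X :: Y :: Zs) =
      -∑ i ∈ Finset.range Zs.length, T (Zs.set i (RR h S X Y (Zs.getD i 0))) := rfl

lemma Rpow_zero_apply (l : List V) : Rpow h S ω 0 l = ω (l.getD 0 0) (l.getD 1 0) := rfl

lemma Rpow_succ_apply (p : ℕ) (l : List V) :
    Rpow h S ω (p + 1) l = RAct h S (Rpow h S ω p) l := by
  unfold Rpow
  rw [Function.iterate_succ_apply']

lemma RR_right_zero (X Y : V) : RR h S X Y 0 = 0 := by simp [RR]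

lemma RR_lin (X Y x y : V) (a b : ℝ) :
    RR h S X Y (a • x + b • y) = a • RR h S X Y x + b • RR h S X Y y := by
  simp only [RR, map_add, map_smul, smul_eq_mul]
  module

lemma getD_set_self (l : List V) (j : ℕ) (hj : j < l.length) (w : V) :
    (l.set j w).getD j 0 = w := by
  rw [List.getD_eq_getElem _ _ (by simpa using hj)]
  exact List.getElem_set_self _

lemma getD_set_ne (l : List V) (i j : ℕ) (hij : i ≠ j) (hj : j < l.length) (w : V) :
    (l.set i w).getD j 0 = l.getD j 0 := by
  rw [List.getD_eq_getElem _ _ (by simpa using hj), List.getElem_set_ne hij,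
    List.getD_eq_getElem _ _ hj]

lemma append_getD_last (Zs : List V) (v : V) : (Zs ++ [v]).getD Zs.length 0 = v := by
  rw [List.getD_append_right _ _ _ _ le_rfl]
  simp

lemma append_set_last (Zs : List V) (v w : V) : (Zs ++ [v]).set Zs.length w = Zs ++ [w] := by
  rw [List.set_append]
  simp

lemma append_getD_lt (Zs : List V) (v : V) (j : ℕ) (hj : j < Zs.length) :
    (Zs ++ [v]).getD j 0 = Zs.getD j 0 :=
  List.getD_append _ _ _ _ hj

lemma append_set_lt (Zs : List V) (v w : V) (j : ℕ) (hj : j < Zs.length) :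
    (Zs ++ [v]).set j w = Zs.set j w ++ [v] := by
  rw [List.set_append]
  simp [hj]

lemma Rpow_zero_entry : ∀ (p : ℕ) (l : List V) (k : ℕ), l.length = 2 * p + 2 →
    k < l.length → l.getD k 0 = 0 → Rpow h S ω p l = 0 := by
  intro p
  induction p with
  | zero =>
    intro l k hlen hk h0
    rw [Rpow_zero_apply]
    have hk2 : k < 2 := by omega
    interval_cases k
    · rw [h0]; simp
    · rw [h0]; simp
  | succ p ih =>
    intro l k hlen hk h0
    rcases l with _ | ⟨X, l⟩
    · simp at hlen
    rcases l with _ | ⟨Y, Zs⟩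
    · simp at hlen
    have hZs : Zs.length = 2 * p + 2 := by simp at hlen; omega
    rw [Rpow_succ_apply, RAct_cons, neg_eq_zero]
    apply Finset.sum_eq_zero
    intro j hj
    rw [Finset.mem_range] at hj
    rcases k with _ | _ | k
    · have hX : X = 0 := by simpa using h0
      rw [hX]
      have : RR h S 0 Y (Zs.getD j 0) = 0 := by simp [RR]
      rw [this]
      exact ih _ j (by simp [hZs]) (by simp [hj]) (getD_set_self _ j hj 0)
    · have hY : Y = 0 := by simpa using h0
      rw [hY]
      have : RR h S X 0 (Zs.getD j 0) = 0 := by simp [RR]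
      rw [this]
      exact ih _ j (by simp [hZs]) (by simp [hj]) (getD_set_self _ j hj 0)
    · have hk' : k < Zs.length := by simp at hk; omega
      have h0' : Zs.getD k 0 = 0 := by simpa using h0
      by_cases hjk : j = k
      · subst hjk
        rw [h0', RR_right_zero]
        exact ih _ j (by simp [hZs]) (by simp [hj]) (getD_set_self _ j hj 0)
      · exact ih _ k (by simp [hZs]) (by simp [hk']) (by
          rw [getD_set_ne _ j k hjk hk']; exact h0')

lemma Rpow_last_linear : ∀ (p : ℕ) (l : List V) (x y : V) (a b : ℝ),
    l.length = 2 * p + 1 →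
    Rpow h S ω p (l ++ [a • x + b • y]) =
      a * Rpow h S ω p (l ++ [x]) + b * Rpow h S ω p (l ++ [y]) := by
  intro p
  induction p with
  | zero =>
    intro l x y a b hlen
    have h1 : (0 : ℕ) < l.length := by omega
    have h2 : l.length ≤ 1 := by omega
    rw [Rpow_zero_apply, Rpow_zero_apply, Rpow_zero_apply,
      List.getD_append _ _ _ _ h1, List.getD_append _ _ _ _ h1,
      List.getD_append _ _ _ _ h1,
      List.getD_append_right _ _ _ _ h2, List.getD_append_right _ _ _ _ h2,
      List.getD_append_right _ _ _ _ h2, hlen]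
    simp
  | succ p ih =>
    intro l x y a b hlen
    rcases l with _ | ⟨X, l⟩
    · simp at hlen
    rcases l with _ | ⟨Y, Zs⟩
    · simp at hlen
    have hZs : Zs.length = 2 * p + 1 := by simp at hlen; omega
    simp only [List.cons_append]
    rw [Rpow_succ_apply, Rpow_succ_apply, Rpow_succ_apply, RAct_cons, RAct_cons, RAct_cons]
    have hlapp : ∀ v : V, (Zs ++ [v]).length = Zs.length + 1 := by simp
    rw [hlapp, hlapp, hlapp, Finset.sum_range_succ, Finset.sum_range_succ,
      Finset.sum_range_succ]
    have hlast : Rpow h S ω p ((Zs ++ [a • x + b • y]).set Zs.length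
        (RR h S X Y ((Zs ++ [a • x + b • y]).getD Zs.length 0))) =
        a * Rpow h S ω p ((Zs ++ [x]).set Zs.length
          (RR h S X Y ((Zs ++ [x]).getD Zs.length 0))) +
        b * Rpow h S ω p ((Zs ++ [y]).set Zs.length
          (RR h S X Y ((Zs ++ [y]).getD Zs.length 0))) := by
      rw [append_getD_last, append_getD_last, append_getD_last, append_set_last,
        append_set_last, append_set_last, RR_lin]
      exact ih Zs _ _ a b hZs
    have hterm : ∀ j ∈ Finset.range Zs.length,
        Rpow h S ω p ((Zs ++ [a • x + b • y]).set j
          (RR h S X Y ((Zs ++ [a • x + b • y]).getD j 0))) =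
        a * Rpow h S ω p ((Zs ++ [x]).set j (RR h S X Y ((Zs ++ [x]).getD j 0))) +
        b * Rpow h S ω p ((Zs ++ [y]).set j (RR h S X Y ((Zs ++ [y]).getD j 0))) := by
      intro j hj
      rw [Finset.mem_range] at hj
      rw [append_getD_lt _ _ _ hj, append_getD_lt _ _ _ hj, append_getD_lt _ _ _ hj,
        append_set_lt _ _ _ _ hj, append_set_lt _ _ _ _ hj, append_set_lt _ _ _ _ hj]
      exact ih _ x y a b (by simp [hZs])
    rw [Finset.sum_congr rfl hterm, hlast, Finset.sum_add_distrib,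
      ← Finset.mul_sum, ← Finset.mul_sum]
    ring

lemma pairList_length (X Y : V) : ∀ p : ℕ, (pairList X Y p).length = 2 * p := by
  intro p
  induction p with
  | zero => rfl
  | succ p ih => simp [pairList, ih]; omega

lemma pairList_getD (X Y : V) : ∀ (p j : ℕ), j < 2 * p →
    (pairList X Y p).getD j 0 = X ∨ (pairList X Y p).getD j 0 = Y := by
  intro p
  induction p with
  | zero => intro j hj; omega
  | succ p ih =>
    intro j hj
    match j with
    | 0 => left; rfl
    | 1 => right; rfl
    | (j + 2) =>
      have := ih j (by omega)
      simpa [pairList] using this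

lemma Rpow_step (u w t : V) (hu : RR h S u w u = 0) (hw : RR h S u w w = 0)
    (ht : RR h S u w t = 0) (p : ℕ) (v : V) :
    Rpow h S ω (p + 1) (pairList u w (p + 1) ++ [t, v]) =
      -Rpow h S ω p (pairList u w p ++ [t, RR h S u w v]) := by
  have hlen : (pairList u w p ++ [t, v]).length = 2 * p + 2 := by
    simp [pairList_length]
  have hcons : pairList u w (p + 1) ++ [t, v] = u :: w :: (pairList u w p ++ [t, v]) := by
    simp [pairList]
  rw [hcons, Rpow_succ_apply, RAct_cons, hlen, Finset.sum_range_succ]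
  have h1 : ∀ j ∈ Finset.range (2 * p + 1),
      Rpow h S ω p ((pairList u w p ++ [t, v]).set j
        (RR h S u w ((pairList u w p ++ [t, v]).getD j 0))) = 0 := by
    intro j hj
    rw [Finset.mem_range] at hj
    have hkill : RR h S u w ((pairList u w p ++ [t, v]).getD j 0) = 0 := by
      rcases lt_or_ge j (2 * p) with hj2 | hj2
      · rw [List.getD_append _ _ _ _ (by rw [pairList_length]; omega)]
        rcases pairList_getD u w p j hj2 with h' | h' <;> rw [h'] <;> assumption
      · have hj' : j = 2 * p := by omega
        subst hj'
        rw [List.getD_append_right _ _ _ _ (by rw [pairList_length]),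
          pairList_length]
        simpa using ht
    rw [hkill]
    exact Rpow_zero_entry h S ω p _ j (by simp [hlen]) (by rw [List.length_set, hlen]; omega)
      (getD_set_self _ j (by rw [hlen]; omega) 0)
  rw [Finset.sum_eq_zero h1, zero_add]
  have hgd : (pairList u w p ++ [t, v]).getD (2 * p + 1) 0 = v := by
    rw [List.getD_append_right _ _ _ _ (by rw [pairList_length]; omega), pairList_length]
    simp
  have hst : (pairList u w p ++ [t, v]).set (2 * p + 1) (RR h S u w v) =
      pairList u w p ++ [t, RR h S u w v] := by
    rw [List.set_append, pairList_length]
    simp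
  rw [hgd, hst]

end Aux

theorem stmt15
    {V : Type*} [AddCommGroup V] [Module ℝ V]
    (n : ℕ) (hn : 2 ≤ n) (e : ℕ → V)
    (hbasis : ∃ b : Module.Basis (Fin (2 * n)) ℝ V, ∀ i : Fin (2 * n), b i = e (i.1 + 1))
    (h ω : V →ₗ[ℝ] V →ₗ[ℝ] ℝ)
    (hsymm : ∀ X Y, h X Y = h Y X)
    (halt : ∀ X, ω X X = 0)
    (S : V →ₗ[ℝ] V)
    (α β ε η : ℝ) (hε : ε = 1 ∨ ε = -1) (hη : η = 1 ∨ η = -1)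
    (hS1 : S (e 1) = α • e 1 + e 2)
    (hS2 : S (e 2) = α • e 2)
    (hS3 : S (e 3) = β • e 3 + e 4)
    (hS4 : S (e 4) = β • e 4)
    (hh12 : h (e 1) (e 2) = ε) (hh21 : h (e 2) (e 1) = ε)
    (hh34 : h (e 3) (e 4) = η) (hh43 : h (e 4) (e 3) = η)
    (hh0 : ∀ i j, 1 ≤ i → i ≤ 2 * n → 1 ≤ j → j ≤ 2 * n → min i j ≤ 4 →
      ¬((i = 1 ∧ j = 2) ∨ (i = 2 ∧ j = 1) ∨ (i = 3 ∧ j = 4) ∨ (i = 4 ∧ j = 3)) →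
      h (e i) (e j) = 0)
    (i : ℕ) (hi1 : 1 ≤ i) (hi : i ≤ 2 * n) (hi2 : i ≠ 2) (hi4 : i ≠ 4) :
    (∀ p : ℕ, 1 ≤ p →
      Rpow h S ω p (pairList (e 1) (e 3) p ++ [e i, e 3]) = 0) ∧
    (∀ p : ℕ,
      Rpow h S ω (2 * p + 1) (pairList (e 1) (e 3) (2 * p + 1) ++ [e i, e 4]) =
        (-1) ^ (p + 1) * η ^ (p + 1) * ε ^ p * (α * ω (e i) (e 1) + ω (e i) (e 2))) := by
  have hn4 : 4 ≤ 2 * n := by omega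
  have R1 : ∀ v, RR h S (e 1) (e 3) v =
      h (e 3) v • (α • e 1 + e 2) - h (e 1) v • (β • e 3 + e 4) := by
    intro v; rw [RR, hS1, hS3]
  have h31 : h (e 3) (e 1) = 0 := hh0 3 1 (by omega) (by omega) (by omega) (by omega)
    (by omega) (by omega)
  have h11 : h (e 1) (e 1) = 0 := hh0 1 1 (by omega) (by omega) (by omega) (by omega)
    (by omega) (by omega)
  have h33 : h (e 3) (e 3) = 0 := hh0 3 3 (by omega) (by omega) (by omega) (by omega)
    (by omega) (by omega)
  have h13 : h (e 1) (e 3) = 0 := hh0 1 3 (by omega) (by omega) (by omega) (by omega)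
    (by omega) (by omega)
  have h32 : h (e 3) (e 2) = 0 := hh0 3 2 (by omega) (by omega) (by omega) (by omega)
    (by omega) (by omega)
  have h14 : h (e 1) (e 4) = 0 := hh0 1 4 (by omega) (by omega) (by omega) (by omega)
    (by omega) (by omega)
  have h3i : h (e 3) (e i) = 0 := hh0 3 i (by omega) (by omega) hi1 hi (by omega) (by omega)
  have h1i : h (e 1) (e i) = 0 := hh0 1 i (by omega) (by omega) hi1 hi (by omega) (by omega)
  have R11 : RR h S (e 1) (e 3) (e 1) = 0 := by rw [R1, h31, h11]; simp
  have R13 : RR h S (e 1) (e 3) (e 3) = 0 := by rw [R1, h33, h13]; simp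
  have R1i : RR h S (e 1) (e 3) (e i) = 0 := by rw [R1, h3i, h1i]; simp
  have R12 : RR h S (e 1) (e 3) (e 2) = (-(ε * β)) • e 3 + (-ε) • e 4 := by
    rw [R1, h32, hh12]; module
  have R14 : RR h S (e 1) (e 3) (e 4) = (η * α) • e 1 + η • e 2 := by
    rw [R1, hh34, h14]; module
  have hstep : ∀ (p : ℕ) (v : V),
      Rpow h S ω (p + 1) (pairList (e 1) (e 3) (p + 1) ++ [e i, v]) =
        -Rpow h S ω p (pairList (e 1) (e 3) p ++ [e i, RR h S (e 1) (e 3) v]) :=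
    Rpow_step h S ω _ _ _ R11 R13 R1i
  have hlin : ∀ (p : ℕ) (a b : ℝ) (x y : V),
      Rpow h S ω p (pairList (e 1) (e 3) p ++ [e i, a • x + b • y]) =
        a * Rpow h S ω p (pairList (e 1) (e 3) p ++ [e i, x]) +
        b * Rpow h S ω p (pairList (e 1) (e 3) p ++ [e i, y]) := by
    intro p a b x y
    have hrw : ∀ v : V, pairList (e 1) (e 3) p ++ [e i, v] =
        (pairList (e 1) (e 3) p ++ [e i]) ++ [v] := by intro v; simp
    rw [hrw, hrw, hrw]
    exact Rpow_last_linear h S ω p _ x y a b (by simp [pairList_length])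
  have hzero : ∀ p : ℕ,
      Rpow h S ω p (pairList (e 1) (e 3) p ++ [e i, (0 : V)]) = 0 := by
    intro p
    have := hlin p 0 0 0 0
    simpa using this
  have hF1 : ∀ p : ℕ,
      Rpow h S ω (p + 1) (pairList (e 1) (e 3) (p + 1) ++ [e i, e 1]) = 0 := by
    intro p; rw [hstep, R11, hzero, neg_zero]
  have hF3 : ∀ p : ℕ,
      Rpow h S ω (p + 1) (pairList (e 1) (e 3) (p + 1) ++ [e i, e 3]) = 0 := by
    intro p; rw [hstep, R13, hzero, neg_zero]
  have hF2 : ∀ p : ℕ,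
      Rpow h S ω (p + 1) (pairList (e 1) (e 3) (p + 1) ++ [e i, e 2]) =
        -((-(ε * β)) * Rpow h S ω p (pairList (e 1) (e 3) p ++ [e i, e 3]) +
          (-ε) * Rpow h S ω p (pairList (e 1) (e 3) p ++ [e i, e 4])) := by
    intro p; rw [hstep, R12, hlin]
  have hF4 : ∀ p : ℕ,
      Rpow h S ω (p + 1) (pairList (e 1) (e 3) (p + 1) ++ [e i, e 4]) =
        -((η * α) * Rpow h S ω p (pairList (e 1) (e 3) p ++ [e i, e 1]) +
          η * Rpow h S ω p (pairList (e 1) (e 3) p ++ [e i, e 2])) := by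
    intro p; rw [hstep, R14, hlin]
  constructor
  · intro p hp
    obtain ⟨q, rfl⟩ : ∃ q, p = q + 1 := ⟨p - 1, by omega⟩
    exact hF3 q
  · intro p
    induction p with
    | zero =>
      simp only [Nat.mul_zero]
      rw [hF4]
      simp only [Rpow_zero_apply, pairList, List.nil_append, List.getD_cons_zero,
        List.getD_cons_succ]
      ring
    | succ p ih =>
      have h1 : 2 * (p + 1) + 1 = (2 * p + 2) + 1 := by ring
      rw [h1, hF4, show 2 * p + 2 = (2 * p + 1) + 1 from rfl, hF1, hF2,
        hF3 (2 * p), ih]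
      ring
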